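/- Let n ≥ 2 be an integer. Then ∫₂^∞ (u−2)^{1/(2n)−1}·(u−2cos(2π/5))^{1/n−1}·(u−2cos(4π/5))^{1/n−1} du = ∫₁^∞ z^{1−5/(2n)}·(z⁵−1)^{1/n−1}·(z+1) dz, and both integrals are finite. (The substitution u = z + 1/z transforms one integral into the other.) -/

import Mathlib

open Real MeasureTheory Set

noncomputable section


lemma cos2pi5 : Real.cos (2*π/5) = (Real.sqrt 5 - 1)/4 := by
  have h : (2*π/5) = 2*(π/5) := by ring
  have h5 : Real.sqrt 5 ^ 2 = 5 := Real.sq_sqrt (by norm_num)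
  rw [h, Real.cos_two_mul, Real.cos_pi_div_five]
  linear_combination h5/8

lemma cos4pi5 : Real.cos (4*π/5) = -((1 + Real.sqrt 5)/4) := by
  have h : (4*π/5) = π - π/5 := by ring
  rw [h, Real.cos_pi_sub, Real.cos_pi_div_five]

lemma cos_sum : Real.cos (2*π/5) + Real.cos (4*π/5) = -(1/2) := by
  rw [cos2pi5, cos4pi5]; ring

lemma cos_prod : Real.cos (2*π/5) * Real.cos (4*π/5) = -(1/4) := by
  have h5 : Real.sqrt 5 ^ 2 = 5 := Real.sq_sqrt (by norm_num)
  rw [cos2pi5, cos4pi5]; linear_combination -h5/16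

lemma phi_image : (fun z : ℝ => z + 1/z) '' Ioi 1 = Ioi 2 := by
  ext u
  constructor
  · rintro ⟨z, hz, rfl⟩
    have hz0 : (0:ℝ) < z := lt_trans one_pos hz
    have e : z + 1/z - 2 = (z-1)^2/z := by field_simp; ring
    have hz' : (1:ℝ) < z := hz
    have hzz : (0:ℝ) < z - 1 := by linarith
    have : (0:ℝ) < z + 1/z - 2 := by
      rw [e]; positivity
    simp only [Set.mem_Ioi]
    linarith
  · intro hu
    rw [Set.mem_Ioi] at hu
    set s := Real.sqrt (u^2 - 4) with hs
    have hs2 : s^2 = u^2 - 4 := Real.sq_sqrt (by nlinarith)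
    have hsgt : u - 2 < s := by
      have := Real.lt_sqrt (x := u - 2) (y := u^2 - 4) (by linarith)
      rw [← hs] at this
      exact this.mpr (by nlinarith)
    refine ⟨(u + s)/2, ?_, ?_⟩
    · simp only [Set.mem_Ioi]; linarith
    · have hz0 : (0:ℝ) < (u+s)/2 := by linarith
      have hus : u + s ≠ 0 := by linarith
      field_simp
      nlinarith [hs2]

lemma phi_inj : Set.InjOn (fun z : ℝ => z + 1/z) (Ioi 1) := by
  intro x hx y hy h
  simp only [Set.mem_Ioi] at hx hy
  have hx0 : x ≠ 0 := by linarith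
  have hy0 : y ≠ 0 := by linarith
  have key : (x - y) * (x*y - 1) = 0 := by
    field_simp at h
    nlinarith [h]
  rcases mul_eq_zero.mp key with h1 | h1
  · linarith [sub_eq_zero.mp h1]
  · nlinarith

lemma phi_deriv {z : ℝ} (hz : z ≠ 0) :
    HasDerivAt (fun z : ℝ => z + 1/z) (1 - 1/z^2) z := by
  have h := (hasDerivAt_id z).add ((hasDerivAt_inv hz))
  simp only [one_div]
  exact (show HasDerivAt (fun x : ℝ => x + x⁻¹) (1 + -(z^2)⁻¹) z from h).congr_deriv (by ring)

lemma key_identity (a b : ℝ) (hab : 2*a = b - 1) {z : ℝ} (hz : 1 < z)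
    {c₂ c₄ : ℝ} (h2 : c₂ ≤ 1) (h4 : c₄ ≤ 1)
    (hsum : c₂ + c₄ = -(1/2)) (hprod : c₂*c₄ = -(1/4)) :
    |1 - 1/z^2| * ((z + 1/z - 2)^a * (z + 1/z - 2*c₂)^b * (z + 1/z - 2*c₄)^b)
      = z^(-a - 2*b - 2) * (z^5 - 1)^b * (z+1) := by
  have hz0 : (0:ℝ) < z := lt_trans one_pos hz
  have hz1 : (0:ℝ) < z - 1 := by linarith
  have hP2 : (0:ℝ) < z^2 - 2*c₂*z + 1 := by nlinarith
  have hP4 : (0:ℝ) < z^2 - 2*c₄*z + 1 := by nlinarith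
  have e1 : z + 1/z - 2 = (z-1)^2 / z := by field_simp; ring
  have e2 : z + 1/z - 2*c₂ = (z^2 - 2*c₂*z + 1)/z := by field_simp; ring
  have e4 : z + 1/z - 2*c₄ = (z^2 - 2*c₄*z + 1)/z := by field_simp; ring
  have habs : |1 - 1/z^2| = (z-1)*(z+1)/z^2 := by
    rw [abs_of_pos (by rw [sub_pos, div_lt_one (by positivity)]; nlinarith)]
    field_simp; ring
  have A1 : ((z-1)^2 / z)^a = (z-1)^(b-1) * (z^a)⁻¹ := by
    rw [Real.div_rpow (by positivity) hz0.le, ← hab,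
      ← Real.rpow_natCast (z-1) 2, ← Real.rpow_mul hz1.le, div_eq_mul_inv]
    norm_num
  have A2 : ((z^2 - 2*c₂*z + 1)/z)^b = (z^2 - 2*c₂*z + 1)^b * (z^b)⁻¹ := by
    rw [Real.div_rpow hP2.le hz0.le, div_eq_mul_inv]
  have A4 : ((z^2 - 2*c₄*z + 1)/z)^b = (z^2 - 2*c₄*z + 1)^b * (z^b)⁻¹ := by
    rw [Real.div_rpow hP4.le hz0.le, div_eq_mul_inv]
  have A5 : (z-1)^(b-1) = (z-1)^b * (z-1)⁻¹ := by
    rw [Real.rpow_sub hz1, Real.rpow_one, div_eq_mul_inv]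
  have A6 : (z^5 - 1)^b = (z-1)^b * (z^2 - 2*c₂*z + 1)^b * (z^2 - 2*c₄*z + 1)^b := by
    rw [show z^5 - 1 = (z-1)*((z^2 - 2*c₂*z + 1)*(z^2 - 2*c₄*z + 1)) from by
        linear_combination (2*z^4 - 2*z^3 + 2*z^2 - 2*z)*hsum + (-4*z^3 + 4*z^2)*hprod,
      Real.mul_rpow hz1.le (by positivity), Real.mul_rpow hP2.le hP4.le]
    ring
  have A7 : z^(-a - 2*b - 2) = (z^a)⁻¹ * (z^b)⁻¹ * (z^b)⁻¹ * (z^2)⁻¹ := by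
    rw [show (-a - 2*b - 2 : ℝ) = (-a) + (-b) + (-b) + (-2) by ring,
      Real.rpow_add hz0, Real.rpow_add hz0, Real.rpow_add hz0,
      Real.rpow_neg hz0.le, Real.rpow_neg hz0.le, Real.rpow_neg hz0.le]
    norm_num [Real.rpow_natCast]
  rw [habs, e1, e2, e4, A1, A2, A4, A5, A6, A7]
  have hza : z^a ≠ 0 := by positivity
  have hzb : z^b ≠ 0 := by positivity
  field_simp

lemma G_integrable (p b : ℝ) (hb1 : -1 < b) (hb0 : b < 0) (hq : p + 5*b + 1 < -1) :
    IntegrableOn (fun z : ℝ => z^p * (z^5 - 1)^b * (z+1)) (Ioi 1) := by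
  have hcont : ContinuousOn (fun z : ℝ => z^p * (z^5 - 1)^b * (z+1)) (Ioi 1) := by
    apply ContinuousOn.mul
    · apply ContinuousOn.mul
      · exact continuousOn_id.rpow_const fun x hx =>
          Or.inl (ne_of_gt (lt_trans one_pos hx))
      · refine ContinuousOn.rpow_const ?_ fun x hx => Or.inl ?_
        · exact ((continuousOn_pow 5).sub continuousOn_const)
        · have hx1 : (1:ℝ) < x := hx
          have hx5 : (1:ℝ) < x^5 := one_lt_pow₀ hx1 (by norm_num)
          exact ne_of_gt (by linarith)
    · exact (continuousOn_id.add continuousOn_const)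
  rw [← Set.Ioc_union_Ioi_eq_Ioi (le_of_lt one_lt_two)]
  apply IntegrableOn.union
  · -- Ioc 1 2
    have hmeas : AEStronglyMeasurable (fun z : ℝ => z^p * (z^5 - 1)^b * (z+1))
        (volume.restrict (Ioc 1 2)) :=
      (hcont.mono Ioc_subset_Ioi_self).aestronglyMeasurable measurableSet_Ioc
    have hint : IntegrableOn (fun z : ℝ => 2^|p| * 3 * (z-1)^b) (Ioc 1 2) := by
      have h0 : IntervalIntegrable (fun x : ℝ => x ^ b) volume 0 1 :=
        intervalIntegral.intervalIntegrable_rpow' hb1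
      have h1 := h0.comp_sub_right 1
      norm_num at h1
      rw [intervalIntegrable_iff_integrableOn_Ioc_of_le (by norm_num)] at h1
      exact h1.const_mul _
    refine Integrable.mono' hint hmeas ?_
    rw [ae_restrict_iff' measurableSet_Ioc]
    filter_upwards with z hz
    obtain ⟨hz1, hz2⟩ := hz
    have h5 : (0:ℝ) < z^5 - 1 := by
      have := one_lt_pow₀ hz1 (by norm_num : 5 ≠ 0); linarith
    have hz0 : (0:ℝ) < z := by linarith
    have hzz : (0:ℝ) < z - 1 := by linarith
    rw [Real.norm_eq_abs, abs_of_nonneg (by positivity)]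
    have b1 : z^p ≤ 2^|p| :=
      le_trans (Real.rpow_le_rpow_of_exponent_le hz1.le (le_abs_self p))
        (Real.rpow_le_rpow hz0.le hz2 (abs_nonneg p))
    have b2 : (z^5-1)^b ≤ (z-1)^b :=
      Real.rpow_le_rpow_of_nonpos hzz (by have := le_self_pow₀ (by linarith : (1:ℝ) ≤ z) (by norm_num : 5 ≠ 0); linarith) hb0.le
    have b3 : z + 1 ≤ 3 := by linarith
    calc z^p * (z^5-1)^b * (z+1)
        ≤ 2^|p| * (z-1)^b * 3 := by
          apply mul_le_mul (mul_le_mul b1 b2 (by positivity) (by positivity)) b3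
            (by linarith) (by positivity)
      _ = 2^|p| * 3 * (z-1)^b := by ring
  · -- Ioi 2
    have hmeas : AEStronglyMeasurable (fun z : ℝ => z^p * (z^5 - 1)^b * (z+1))
        (volume.restrict (Ioi 2)) :=
      (hcont.mono (Ioi_subset_Ioi (by norm_num))).aestronglyMeasurable measurableSet_Ioi
    have hint : IntegrableOn (fun z : ℝ => 2^(1-b) * z^(p+5*b+1)) (Ioi 2) :=
      (integrableOn_Ioi_rpow_of_lt hq (by norm_num : (0:ℝ) < 2)).const_mul _
    refine Integrable.mono' hint hmeas ?_
    rw [ae_restrict_iff' measurableSet_Ioi]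
    filter_upwards with z hz
    have hz2 : (2:ℝ) < z := hz
    have hz0 : (0:ℝ) < z := by linarith
    have h25 : (2:ℝ)^5 < z^5 := pow_lt_pow_left₀ hz2 (by norm_num) (by norm_num)
    have h5 : (0:ℝ) < z^5 - 1 := by norm_num at h25; linarith
    have h52 : z^5/2 ≤ z^5 - 1 := by norm_num at h25; linarith
    rw [Real.norm_eq_abs, abs_of_nonneg (by positivity)]
    have b2 : (z^5-1)^b ≤ (z^5/2)^b :=
      Real.rpow_le_rpow_of_nonpos (by positivity) h52 hb0.le
    have key : z^p * (z^5/2)^b * (2*z) = 2^(1-b) * z^(p+5*b+1) := by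
      rw [Real.div_rpow (by positivity) (by norm_num),
        ← Real.rpow_natCast z 5, ← Real.rpow_mul hz0.le,
        show (p+5*b+1 : ℝ) = p + (5:ℕ)*b + 1 by norm_num,
        Real.rpow_add hz0, Real.rpow_add hz0, Real.rpow_one,
        Real.rpow_sub (by norm_num : (0:ℝ) < 2), Real.rpow_one]
      field_simp
    calc z^p * (z^5-1)^b * (z+1)
        ≤ z^p * (z^5/2)^b * (2*z) := by
          apply mul_le_mul (mul_le_mul le_rfl b2 (by positivity) (by positivity))
            (by linarith) (by linarith) (by positivity)
      _ = 2^(1-b) * z^(p+5*b+1) := key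


/-- The substitution `u = z + 1/z` transforms the Schwarz–Christoffel side-length integral
`∫₂^∞ (u−2)^{1/2n−1}(u−2cos(2π/5))^{1/n−1}(u−2cos(4π/5))^{1/n−1} du` into
`∫₁^∞ z^{1−5/2n}(z⁵−1)^{1/n−1}(z+1) dz`; both improper integrals are finite and equal. -/
theorem schwarz_christoffel_integral_substitution
    (n : ℕ) (hn : 2 ≤ n) :
    IntegrableOn (fun u : ℝ =>
        (u - 2) ^ ((1 : ℝ) / (2 * n) - 1) * (u - 2 * Real.cos (2 * π / 5)) ^ ((1 : ℝ) / n - 1)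
          * (u - 2 * Real.cos (4 * π / 5)) ^ ((1 : ℝ) / n - 1)) (Set.Ioi 2) ∧
    IntegrableOn (fun z : ℝ =>
        z ^ (1 - 5 / (2 * (n : ℝ))) * (z ^ 5 - 1) ^ ((1 : ℝ) / n - 1) * (z + 1))
      (Set.Ioi 1) ∧
    (∫ u in Set.Ioi (2 : ℝ),
        (u - 2) ^ ((1 : ℝ) / (2 * n) - 1) * (u - 2 * Real.cos (2 * π / 5)) ^ ((1 : ℝ) / n - 1)
          * (u - 2 * Real.cos (4 * π / 5)) ^ ((1 : ℝ) / n - 1))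
      = ∫ z in Set.Ioi (1 : ℝ),
          z ^ (1 - 5 / (2 * (n : ℝ))) * (z ^ 5 - 1) ^ ((1 : ℝ) / n - 1) * (z + 1) := by
  have hn2 : (2:ℝ) ≤ (n:ℝ) := by exact_mod_cast hn
  have hn0 : (n:ℝ) ≠ 0 := by linarith
  set a : ℝ := (1 : ℝ) / (2 * n) - 1 with ha
  set b : ℝ := (1 : ℝ) / n - 1 with hb
  set p : ℝ := 1 - 5 / (2 * (n : ℝ)) with hp
  have hab : 2*a = b - 1 := by rw [ha, hb]; field_simp; ring
  have hb1 : -1 < b := by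
    rw [hb]
    have : (0:ℝ) < 1/n := by positivity
    linarith
  have hb0 : b < 0 := by
    rw [hb]
    have : (1:ℝ)/n ≤ 1/2 := by
      rw [div_le_div_iff₀ (by linarith) (by norm_num)]; linarith
    linarith
  have hq : p + 5*b + 1 < -1 := by
    rw [hp, hb]
    have h1 : 5 / (2*(n:ℝ)) ≤ 5/4 := by
      apply div_le_div_of_nonneg_left (by norm_num) (by norm_num) (by linarith)
    have h2 : (1:ℝ)/n ≤ 1/2 := by
      rw [div_le_div_iff₀ (by linarith) (by norm_num)]; linarith
    have h3 : 5 / (2*(n:ℝ)) = 5 * ((1:ℝ)/n) / 2 := by field_simp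
    linarith
  have hpe : p = -a - 2*b - 2 := by rw [hp, ha, hb]; field_simp; ring
  have hG : IntegrableOn (fun z : ℝ => z^p * (z^5 - 1)^b * (z+1)) (Ioi 1) :=
    G_integrable p b hb1 hb0 hq
  have hderiv : ∀ x ∈ Ioi (1:ℝ),
      HasDerivWithinAt (fun z : ℝ => z + 1/z) (1 - 1/x^2) (Ioi 1) x := fun x hx =>
    (phi_deriv (ne_of_gt (lt_trans one_pos hx))).hasDerivWithinAt
  have hEq : ∀ z ∈ Ioi (1:ℝ),
      |1 - 1/z^2| • ((z + 1/z - 2) ^ a * (z + 1/z - 2 * Real.cos (2 * π / 5)) ^ b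
          * (z + 1/z - 2 * Real.cos (4 * π / 5)) ^ b)
        = z^p * (z^5 - 1)^b * (z+1) := by
    intro z hz
    rw [smul_eq_mul, hpe]
    exact key_identity a b hab hz (Real.cos_le_one _) (Real.cos_le_one _) cos_sum cos_prod
  refine ⟨?_, hG, ?_⟩
  · rw [← phi_image,
      integrableOn_image_iff_integrableOn_abs_deriv_smul measurableSet_Ioi hderiv phi_inj]
    exact hG.congr_fun (fun x hx => (hEq x hx).symm) measurableSet_Ioi
  · rw [← phi_image,
      integral_image_eq_integral_abs_deriv_smul measurableSet_Ioi hderiv phi_inj]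
    exact setIntegral_congr_fun measurableSet_Ioi hEq

end
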